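/- Let U ∈ ℝ^{n×d} have orthonormal columns, let w ∈ ℝ^n satisfy Uᵀw = 0, and fix c ≥ 1. Let l_i = ‖u^(i)‖₂², p_i = min{1, c·l_i/d}, let δ₁, …, δ_n be independent {0,1}-valued random variables with P(δ_i = 1) = p_i, and let D be the random n×n diagonal matrix with D_ii = δ_i/p_i when p_i > 0 and D_ii = 0 when p_i = 0. Then for every δ ∈ (0, 1), with probability at least 1 − δ, ‖UᵀDw‖₂ ≤ δ⁻¹·√(d/c)·‖w‖₂. -/

import Mathlib

open Matrix BigOperators
open scoped Classical

/-- Euclidean norm of a real vector. -/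
noncomputable def vnorm {m : ℕ} (v : Fin m → ℝ) : ℝ := Real.sqrt (∑ i, v i ^ 2)

/-- Probability of the outcome `e` when `e i = true` independently with probability `p i`. -/
noncomputable def bernWeight {n : ℕ} (p : Fin n → ℝ) (e : Fin n → Bool) : ℝ :=
  ∏ i, if e i then p i else 1 - p i

lemma sum_prod_bool {n : ℕ} (f : Fin n → Bool → ℝ) :
    ∑ e : Fin n → Bool, ∏ i, f i (e i) = ∏ i, (f i false + f i true) := by
  have h := Finset.prod_univ_sum (fun _ : Fin n => (Finset.univ : Finset Bool)) f
  rw [Fintype.piFinset_univ] at h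
  rw [← h]
  exact Finset.prod_congr rfl fun i _ => by simp [Fintype.sum_bool, add_comm]

lemma sum_bern_single {n : ℕ} (p : Fin n → ℝ) (i : Fin n) (f : Bool → ℝ) :
    ∑ e : Fin n → Bool, bernWeight p e * f (e i)
      = (1 - p i) * f false + p i * f true := by
  set F : Fin n → Bool → ℝ :=
    fun m b => (if b then p m else 1 - p m) * (if m = i then f b else 1) with hF
  have key : ∀ e : Fin n → Bool, bernWeight p e * f (e i) = ∏ m, F m (e m) := by
    intro e
    simp only [hF, Finset.prod_mul_distrib]
    rw [bernWeight]
    congr 1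
    rw [Finset.prod_eq_single i (by intro b _ hb; simp [hb]) (by simp)]
    simp
  rw [Finset.sum_congr rfl fun e _ => key e, sum_prod_bool]
  rw [Finset.prod_eq_single i (by intro b _ hb; simp [hF, hb]) (by simp)]
  simp [hF]

lemma sum_bern_pair {n : ℕ} (p : Fin n → ℝ) {i k : Fin n} (hik : i ≠ k) (f g : Bool → ℝ) :
    ∑ e : Fin n → Bool, bernWeight p e * (f (e i) * g (e k))
      = ((1 - p i) * f false + p i * f true) * ((1 - p k) * g false + p k * g true) := by
  set F : Fin n → Bool → ℝ :=
    fun m b => (if b then p m else 1 - p m) * ((if m = i then f b else 1) *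
          (if m = k then g b else 1)) with hF
  have key : ∀ e : Fin n → Bool, bernWeight p e * (f (e i) * g (e k)) = ∏ m, F m (e m) := by
    intro e
    simp only [hF, Finset.prod_mul_distrib]
    rw [bernWeight]
    congr 1
    congr 1
    · rw [Finset.prod_eq_single i (by intro b _ hb; simp [hb]) (by simp)]
      simp
    · rw [Finset.prod_eq_single k (by intro b _ hb; simp [hb]) (by simp)]
      simp
  rw [Finset.sum_congr rfl fun e _ => key e, sum_prod_bool]
  have hsub : ({i, k} : Finset (Fin n)) ⊆ Finset.univ := Finset.subset_univ _
  rw [← Finset.prod_subset hsub (by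
    intro m _ hm
    simp only [Finset.mem_insert, Finset.mem_singleton, not_or] at hm
    simp [hF, hm.1, hm.2])]
  rw [Finset.prod_pair hik]
  simp [hF, hik, hik.symm]

lemma second_moment {n : ℕ} (p : Fin n → ℝ) (a : Fin n → ℝ)
    (ha : ∀ i, p i = 0 → a i = 0) :
    ∑ e : Fin n → Bool, bernWeight p e * (∑ i, a i * ((if e i then 1 / p i else 0) - 1)) ^ 2
      = ∑ i, a i ^ 2 * ((1 - p i) / p i) := by
  set z : Fin n → Bool → ℝ := fun i b => (if b then 1 / p i else 0) - 1 with hz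
  have hmean : ∀ i, p i ≠ 0 → (1 - p i) * z i false + p i * z i true = 0 := by
    intro i hpi
    simp only [hz, if_true, if_false, Bool.false_eq_true]
    field_simp
    ring
  have hsq : ∀ i, p i ≠ 0 →
      (1 - p i) * (z i false * z i false) + p i * (z i true * z i true) = (1 - p i) / p i := by
    intro i hpi
    simp only [hz, if_true, if_false, Bool.false_eq_true]
    field_simp
    ring
  have expand : ∀ e : Fin n → Bool,
      bernWeight p e * (∑ i, a i * z i (e i)) ^ 2
        = ∑ i, ∑ k, bernWeight p e * ((a i * z i (e i)) * (a k * z k (e k))) := by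
    intro e
    rw [sq, Finset.sum_mul_sum]
    rw [Finset.mul_sum]
    exact Finset.sum_congr rfl fun i _ => by rw [Finset.mul_sum]
  calc ∑ e : Fin n → Bool, bernWeight p e * (∑ i, a i * ((if e i then 1 / p i else 0) - 1)) ^ 2
      = ∑ e : Fin n → Bool, ∑ i, ∑ k,
          bernWeight p e * ((a i * z i (e i)) * (a k * z k (e k))) :=
        Finset.sum_congr rfl fun e _ => expand e
    _ = ∑ i, ∑ k, ∑ e : Fin n → Bool,
          bernWeight p e * ((a i * z i (e i)) * (a k * z k (e k))) := by
        rw [Finset.sum_comm]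
        exact Finset.sum_congr rfl fun i _ => Finset.sum_comm
    _ = ∑ i, a i ^ 2 * ((1 - p i) / p i) := by
        refine Finset.sum_congr rfl fun i _ => ?_
        rw [Finset.sum_eq_single i]
        · -- diagonal term
          have : ∀ e : Fin n → Bool,
              bernWeight p e * ((a i * z i (e i)) * (a i * z i (e i)))
                = a i ^ 2 * (bernWeight p e * ((fun b => z i b * z i b) (e i))) := by
            intro e; ring
          rw [Finset.sum_congr rfl fun e _ => this e, ← Finset.mul_sum,
            sum_bern_single p i (fun b => z i b * z i b)]
          by_cases hpi : p i = 0
          · simp [ha i hpi]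
          · rw [hsq i hpi]
        · -- off-diagonal
          intro k _ hki
          have : ∀ e : Fin n → Bool,
              bernWeight p e * ((a i * z i (e i)) * (a k * z k (e k)))
                = (a i * a k) * (bernWeight p e * (z i (e i) * z k (e k))) := by
            intro e; ring
          rw [Finset.sum_congr rfl fun e _ => this e, ← Finset.mul_sum,
            sum_bern_pair p (Ne.symm hki) (z i) (z k)]
          by_cases hpi : p i = 0
          · simp [ha i hpi]
          · rw [hmean i hpi]
            ring
        · intro h; exact absurd (Finset.mem_univ i) h

lemma bern_total {n : ℕ} (p : Fin n → ℝ) : ∑ e : Fin n → Bool, bernWeight p e = 1 := by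
  have h := sum_prod_bool (fun i b => if b then p i else 1 - p i)
  simpa [bernWeight] using h

lemma bern_nonneg {n : ℕ} (p : Fin n → ℝ) (hp0 : ∀ i, 0 ≤ p i) (hp1 : ∀ i, p i ≤ 1)
    (e : Fin n → Bool) : 0 ≤ bernWeight p e := by
  refine Finset.prod_nonneg fun i _ => ?_
  by_cases h : e i
  · rw [if_pos h]; exact hp0 i
  · rw [if_neg h]; linarith [hp1 i]

/-- Leverage-score sampling applied to a vector `w` orthogonal to the columns of `U`:
for every `δ ∈ (0,1)`, with probability at least `1 − δ`,
`‖UᵀDw‖ ≤ δ⁻¹·√(d/c)·‖w‖`. -/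
theorem stmt_14 {n d : ℕ}
    (U : Matrix (Fin n) (Fin d) ℝ) (hU : Uᵀ * U = 1)
    (w : Fin n → ℝ) (hw : Uᵀ.mulVec w = 0)
    (c : ℕ) (hc : 1 ≤ c)
    (l : Fin n → ℝ) (hl : l = fun i => ∑ j, U i j ^ 2)
    (prob : Fin n → ℝ) (hprob : prob = fun i => min 1 ((c : ℝ) * l i / d))
    (D : (Fin n → Bool) → Matrix (Fin n) (Fin n) ℝ)
    (hD : D = fun e => Matrix.diagonal fun i => if e i then 1 / prob i else 0)
    (δ : ℝ) (hδ : δ ∈ Set.Ioo (0 : ℝ) 1) :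
    1 - δ ≤
      ∑ e : Fin n → Bool,
        if vnorm (Uᵀ.mulVec ((D e).mulVec w)) ≤ δ⁻¹ * Real.sqrt ((d : ℝ) / c) * vnorm w
        then bernWeight prob e else 0 := by
  obtain ⟨hδ0, hδ1⟩ := hδ
  set t : ℝ := δ⁻¹ * Real.sqrt ((d : ℝ) / c) * vnorm w with ht
  have hc' : (0 : ℝ) < c := by exact_mod_cast hc
  have hl0 : ∀ i, 0 ≤ l i := fun i => by
    rw [hl]; exact Finset.sum_nonneg fun j _ => sq_nonneg _
  have hp0 : ∀ i, 0 ≤ prob i := fun i => by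
    rw [hprob]
    exact le_min zero_le_one (div_nonneg (mul_nonneg hc'.le (hl0 i)) (Nat.cast_nonneg d))
  have hp1 : ∀ i, prob i ≤ 1 := fun i => by rw [hprob]; exact min_le_left _ _
  have hW0 : ∀ e, 0 ≤ bernWeight prob e := bern_nonneg prob hp0 hp1
  have ht0 : 0 ≤ t := by
    refine mul_nonneg (mul_nonneg (inv_nonneg.2 hδ0.le) (Real.sqrt_nonneg _)) ?_
    exact Real.sqrt_nonneg _
  -- trivial-case helper
  have triv : (∀ e : Fin n → Bool,
      vnorm (Uᵀ.mulVec ((D e).mulVec w)) ≤ t) →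
      1 - δ ≤ ∑ e : Fin n → Bool,
        if vnorm (Uᵀ.mulVec ((D e).mulVec w)) ≤ t then bernWeight prob e else 0 := by
    intro h
    rw [Finset.sum_congr rfl fun e _ => if_pos (h e), bern_total]
    linarith
  by_cases hd : d = 0
  · apply triv
    intro e
    subst hd
    have : vnorm (Uᵀ.mulVec ((D e).mulVec w)) = 0 := by
      rw [vnorm]; simp
    rw [this]; exact ht0
  have hd' : (0 : ℝ) < d := by
    have : 0 < d := Nat.pos_of_ne_zero hd
    exact_mod_cast this
  by_cases hw2 : ∑ i, w i ^ 2 = 0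
  · apply triv
    intro e
    have hwz : w = 0 := by
      funext i
      have := (Finset.sum_eq_zero_iff_of_nonneg (fun i _ => sq_nonneg (w i))).1 hw2 i
        (Finset.mem_univ i)
      exact (pow_eq_zero_iff two_ne_zero).1 this
    rw [hwz]
    simp only [Matrix.mulVec_zero]
    have : vnorm (0 : Fin d → ℝ) = 0 := by rw [vnorm]; simp
    rw [this]; exact ht0
  have hw2' : 0 < ∑ i, w i ^ 2 :=
    lt_of_le_of_ne (Finset.sum_nonneg fun i _ => sq_nonneg _) (Ne.symm hw2)
  -- p i = 0 implies row of U vanishes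
  have hpz : ∀ i, prob i = 0 → ∀ j, U i j = 0 := by
    intro i hpi j
    have h1 : min 1 ((c : ℝ) * l i / d) = 0 := by rw [hprob] at hpi; exact hpi
    have h2 : (c : ℝ) * l i / d = 0 := by
      by_contra hne
      have hxpos : 0 < (c : ℝ) * l i / d :=
        lt_of_le_of_ne (div_nonneg (mul_nonneg hc'.le (hl0 i)) hd'.le) (Ne.symm hne)
      have : 0 < min 1 ((c : ℝ) * l i / d) := lt_min one_pos hxpos
      exact absurd h1 this.ne'
    have h3 : l i = 0 := by
      rw [div_eq_zero_iff] at h2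
      rcases h2 with h | h
      · rcases mul_eq_zero.1 h with h' | h'
        · exact absurd h' hc'.ne'
        · exact h'
      · exact absurd h hd'.ne'
    rw [hl] at h3
    have := (Finset.sum_eq_zero_iff_of_nonneg (fun j _ => sq_nonneg (U i j))).1 h3 j
      (Finset.mem_univ j)
    exact (pow_eq_zero_iff two_ne_zero).1 this
  -- entries of the sampled product
  have hentry : ∀ (e : Fin n → Bool) (j : Fin d),
      Uᵀ.mulVec ((D e).mulVec w) j
        = ∑ i, (w i * U i j) * ((if e i then 1 / prob i else 0) - 1) := by
    intro e j
    have h0 : ∑ i, U i j * w i = 0 := by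
      have := congrFun hw j
      simpa [Matrix.mulVec, dotProduct, Matrix.transpose_apply] using this
    rw [hD]
    simp only [Matrix.mulVec, dotProduct, Matrix.transpose_apply,
      Matrix.diagonal_apply, ite_mul, zero_mul, Finset.sum_ite_eq, Finset.mem_univ, if_true]
    have expand : ∀ i, (w i * U i j) * ((if e i then 1 / prob i else 0) - 1)
        = U i j * ((if e i then 1 / prob i else 0) * w i) - U i j * w i := fun i => by ring
    rw [Finset.sum_congr rfl fun i _ => expand i, Finset.sum_sub_distrib, h0, sub_zero]
    exact Finset.sum_congr rfl fun i _ => by by_cases hb : e i <;> simp [hb] <;> ring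
  -- second moment bound
  set X : (Fin n → Bool) → ℝ := fun e => ∑ j, (Uᵀ.mulVec ((D e).mulVec w) j) ^ 2 with hX
  have hX0 : ∀ e, 0 ≤ X e := fun e => Finset.sum_nonneg fun j _ => sq_nonneg _
  have hEX : ∑ e : Fin n → Bool, bernWeight prob e * X e
      ≤ ((d : ℝ) / c) * ∑ i, w i ^ 2 := by
    have step1 : ∑ e : Fin n → Bool, bernWeight prob e * X e
        = ∑ j, ∑ i, (w i * U i j) ^ 2 * ((1 - prob i) / prob i) := by
      have : ∀ e, bernWeight prob e * X e
          = ∑ j, bernWeight prob e *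
              (∑ i, (w i * U i j) * ((if e i then 1 / prob i else 0) - 1)) ^ 2 := by
        intro e
        rw [hX, Finset.mul_sum]
        exact Finset.sum_congr rfl fun j _ => by rw [hentry e j]
      rw [Finset.sum_congr rfl fun e _ => this e, Finset.sum_comm]
      exact Finset.sum_congr rfl fun j _ =>
        second_moment prob (fun i => w i * U i j)
          (fun i hpi => by simp only [hpz i hpi j, mul_zero])
    rw [step1, Finset.sum_comm]
    have bound : ∀ i, ∑ j, (w i * U i j) ^ 2 * ((1 - prob i) / prob i)
        ≤ w i ^ 2 * ((d : ℝ) / c) := by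
      intro i
      have hsum : ∑ j, (w i * U i j) ^ 2 * ((1 - prob i) / prob i)
          = w i ^ 2 * (l i * ((1 - prob i) / prob i)) := by
        rw [hl, Finset.sum_mul, Finset.mul_sum]
        exact Finset.sum_congr rfl fun j _ => by ring
      rw [hsum]
      have key : l i * ((1 - prob i) / prob i) ≤ (d : ℝ) / c := by
        by_cases hpi : prob i = 0
        · have : l i = 0 := by
            rw [hl]
            exact Finset.sum_eq_zero fun j _ => by rw [hpz i hpi j]; ring
          rw [this, zero_mul]
          positivity
        · have hppos : 0 < prob i := lt_of_le_of_ne (hp0 i) (Ne.symm hpi)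
          by_cases h1 : (1 : ℝ) ≤ (c : ℝ) * l i / d
          · have : prob i = 1 := by rw [hprob]; exact min_eq_left h1
            rw [this]
            simp only [sub_self, zero_div, mul_zero]
            positivity
          · push_neg at h1
            have hpv : prob i = (c : ℝ) * l i / d := by
              rw [hprob]; exact min_eq_right h1.le
            have hlpos : 0 < l i := by
              by_contra h
              push_neg at h
              have : l i = 0 := le_antisymm h (hl0 i)
              rw [hpv, this] at hppos
              simp at hppos
            have heq : l i * ((1 - prob i) / prob i) = (d : ℝ) / c - l i := by
              rw [hpv]
              field_simp
            rw [heq]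
            linarith [hl0 i]
      exact mul_le_mul_of_nonneg_left key (sq_nonneg _)
    refine le_trans (Finset.sum_le_sum fun i _ => bound i) ?_
    rw [← Finset.sum_mul, mul_comm]
  -- vnorm squared equals X
  have hvX : ∀ e, vnorm (Uᵀ.mulVec ((D e).mulVec w)) ^ 2 = X e := fun e =>
    Real.sq_sqrt (hX0 e)
  have ht2 : t ^ 2 = δ⁻¹ ^ 2 * (((d : ℝ) / c) * ∑ i, w i ^ 2) := by
    rw [ht, vnorm, mul_pow, mul_pow, Real.sq_sqrt (by positivity : (0:ℝ) ≤ (d:ℝ)/c),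
      Real.sq_sqrt (Finset.sum_nonneg fun i _ => sq_nonneg (w i))]
    ring
  have ht2pos : 0 < t ^ 2 := by
    rw [ht2]; positivity
  -- Markov
  set Pbad : ℝ := ∑ e : Fin n → Bool,
    if vnorm (Uᵀ.mulVec ((D e).mulVec w)) ≤ t then 0 else bernWeight prob e with hPbad
  have hsplit : ∑ e : Fin n → Bool,
      (if vnorm (Uᵀ.mulVec ((D e).mulVec w)) ≤ t then bernWeight prob e else 0)
      = 1 - Pbad := by
    rw [hPbad, eq_sub_iff_add_eq, ← Finset.sum_add_distrib, ← bern_total prob]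
    refine Finset.sum_congr rfl fun e _ => ?_
    by_cases h : vnorm (Uᵀ.mulVec ((D e).mulVec w)) ≤ t
    · rw [if_pos h, if_pos h, add_zero]
    · rw [if_neg h, if_neg h, zero_add]
  have hmarkov : Pbad * t ^ 2 ≤ ∑ e : Fin n → Bool, bernWeight prob e * X e := by
    rw [hPbad, Finset.sum_mul]
    refine Finset.sum_le_sum fun e _ => ?_
    by_cases h : vnorm (Uᵀ.mulVec ((D e).mulVec w)) ≤ t
    · rw [if_pos h]
      simpa using mul_nonneg (hW0 e) (hX0 e)
    · rw [if_neg h]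
      push_neg at h
      have : t ^ 2 ≤ X e := by
        rw [← hvX e]
        exact pow_le_pow_left₀ ht0 h.le 2
      exact mul_le_mul_of_nonneg_left this (hW0 e)
  have hPb : Pbad ≤ δ := by
    have h1 : Pbad * t ^ 2 ≤ ((d : ℝ) / c) * ∑ i, w i ^ 2 := le_trans hmarkov hEX
    have h2 : ((d : ℝ) / c) * (∑ i, w i ^ 2) = δ ^ 2 * t ^ 2 := by
      rw [ht2, ← mul_assoc, show δ ^ 2 * δ⁻¹ ^ 2 = 1 from by field_simp, one_mul]
    rw [h2] at h1
    have h3 : Pbad ≤ δ ^ 2 := le_of_mul_le_mul_right h1 ht2pos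
    nlinarith
  rw [hsplit]
  linarith
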